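/- Let X be a subshift of finite type and f : X → X a cellular automaton that is von Neumann regular in End(X). Then the image f(X) is a subshift of finite type. -/

import Mathlib

/-- The shift map on the full shift `A^ℤ`: `σ(x)_i = x_{i+1}`. -/
def shiftMap {A : Type*} (x : ℤ → A) : ℤ → A := fun i => x (i + 1)

/-- A cellular automaton on the full shift `A^ℤ` (with the product topology,
`A` discrete): a continuous map commuting with the shift. -/
def IsCA {A : Type*} [TopologicalSpace A] (f : (ℤ → A) → (ℤ → A)) : Prop :=
  Continuous f ∧ ∀ x, f (shiftMap x) = shiftMap (f x)

/-- `f` is von Neumann regular in the monoid `End(A^ℤ)` of cellular automata: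
there is a CA `h` with `f ∘ h ∘ f = f` and `h ∘ f ∘ h = h`. -/
def IsRegularCA {A : Type*} [TopologicalSpace A] (f : (ℤ → A) → (ℤ → A)) : Prop :=
  ∃ h : (ℤ → A) → (ℤ → A), IsCA h ∧ f ∘ h ∘ f = f ∧ h ∘ f ∘ h = h

/-- A subshift: a closed, shift-invariant subset of the full shift. -/
def IsSubshift {A : Type*} [TopologicalSpace A] (X : Set (ℤ → A)) : Prop :=
  IsClosed X ∧ shiftMap '' X = X

/-- The finite word `w` occurs as a subword of the bi-infinite sequence `x`. -/
def occursIn {A : Type*} (w : List A) (x : ℤ → A) : Prop :=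
  ∃ i : ℤ, ∀ k : Fin w.length, x (i + (k.val : ℤ)) = w.get k

/-- A subshift of finite type: the set of points avoiding a finite set `F` of
forbidden finite words. -/
def IsSFT {A : Type*} (X : Set (ℤ → A)) : Prop :=
  ∃ F : Set (List A), F.Finite ∧ X = {x | ∀ w ∈ F, ¬ occursIn w x}

/-- The language of a subshift: the finite words occurring in its points. -/
def lang {A : Type*} (X : Set (ℤ → A)) : Set (List A) :=
  {w | ∃ x ∈ X, occursIn w x}

/-- `X` is mixing: for all words `u, v` in the language of `X` there is `N` such
that for every `n ≥ N` some word `u w v` with `|w| = n` is in the language. -/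
def IsMixing {A : Type*} (X : Set (ℤ → A)) : Prop :=
  ∀ u ∈ lang X, ∀ v ∈ lang X, ∃ N : ℕ, ∀ n : ℕ, N ≤ n →
    ∃ w : List A, w.length = n ∧ (u ++ w ++ v) ∈ lang X

/-- A cellular automaton on the subshift `X`: a map `X → X` (presented as a map
of the ambient full shift restricted to `X`) that is continuous on `X` and
commutes with the shift on `X`. -/
def IsCAOn {A : Type*} [TopologicalSpace A] (X : Set (ℤ → A))
    (f : (ℤ → A) → (ℤ → A)) : Prop :=
  Set.MapsTo f X X ∧ ContinuousOn f X ∧ ∀ x ∈ X, f (shiftMap x) = shiftMap (f x)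

/-- `f` is von Neumann regular as an element of the monoid `End(X)` of cellular
automata on `X`: there is a CA `h` on `X` with `f∘h∘f = f` and `h∘f∘h = h` as
maps on `X`. -/
def IsRegularCAOn {A : Type*} [TopologicalSpace A] (X : Set (ℤ → A))
    (f : (ℤ → A) → (ℤ → A)) : Prop :=
  ∃ h : (ℤ → A) → (ℤ → A), IsCAOn X h ∧
    (∀ x ∈ X, f (h (f x)) = f x) ∧ (∀ x ∈ X, h (f (h x)) = h x)




/-- inverse shift -/
def shiftInv {A : Type*} (x : ℤ → A) : ℤ → A := fun i => x (i - 1)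

def shiftZ {A : Type*} (n : ℤ) (x : ℤ → A) : ℤ → A := fun i => x (i + n)

lemma shiftMap_shiftInv {A : Type*} (x : ℤ → A) : shiftMap (shiftInv x) = x := by
  funext i; simp [shiftMap, shiftInv]

lemma shiftInv_shiftMap {A : Type*} (x : ℤ → A) : shiftInv (shiftMap x) = x := by
  funext i; simp [shiftMap, shiftInv]

lemma shiftZ_add_one {A : Type*} (n : ℤ) (x : ℤ → A) :
    shiftZ (n + 1) x = shiftMap (shiftZ n x) := by
  funext i; simp [shiftZ, shiftMap]; ring_nf

lemma shiftZ_sub_one {A : Type*} (n : ℤ) (x : ℤ → A) :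
    shiftZ (n - 1) x = shiftInv (shiftZ n x) := by
  funext i; simp [shiftZ, shiftInv]; ring_nf

lemma shiftZ_zero {A : Type*} (x : ℤ → A) : shiftZ 0 x = x := by
  funext i; simp [shiftZ]

section
variable {A : Type*} [TopologicalSpace A] {X : Set (ℤ → A)} (hX : IsSubshift X)
include hX

lemma shiftMap_mem {x : ℤ → A} (hx : x ∈ X) : shiftMap x ∈ X := by
  rw [← hX.2]; exact ⟨x, hx, rfl⟩

lemma shiftInv_mem {x : ℤ → A} (hx : x ∈ X) : shiftInv x ∈ X := by
  rw [← hX.2] at hx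
  obtain ⟨y, hy, rfl⟩ := hx
  rwa [shiftInv_shiftMap]

lemma shiftZ_mem (n : ℤ) {x : ℤ → A} (hx : x ∈ X) : shiftZ n x ∈ X := by
  induction n using Int.induction_on with
  | zero => rwa [shiftZ_zero]
  | succ n ih => rw [shiftZ_add_one]; exact shiftMap_mem hX ih
  | pred n ih => rw [show (-(n:ℤ) - 1) = (-(n:ℤ)) - 1 by ring, shiftZ_sub_one]
                 exact shiftInv_mem hX ih

/-- commutation with shiftZ for a shift-commuting map preserving X -/
lemma shiftZ_comm {e : (ℤ → A) → (ℤ → A)} (hmaps : Set.MapsTo e X X)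
    (hcomm : ∀ x ∈ X, e (shiftMap x) = shiftMap (e x)) (n : ℤ) {x : ℤ → A} (hx : x ∈ X) :
    e (shiftZ n x) = shiftZ n (e x) := by
  have hinv : ∀ y ∈ X, e (shiftInv y) = shiftInv (e y) := by
    intro y hy
    have h1 : shiftInv y ∈ X := shiftInv_mem hX hy
    have := hcomm (shiftInv y) h1
    rw [shiftMap_shiftInv] at this
    rw [this, shiftInv_shiftMap]
  induction n using Int.induction_on with
  | zero => rw [shiftZ_zero, shiftZ_zero]
  | succ n ih =>
      rw [shiftZ_add_one, shiftZ_add_one, ← ih,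
        hcomm _ (shiftZ_mem hX _ hx)]
  | pred n ih =>
      rw [show (-(n:ℤ) - 1) = (-(n:ℤ)) - 1 by ring, shiftZ_sub_one, shiftZ_sub_one, ← ih,
        hinv _ (shiftZ_mem hX _ hx)]

end


lemma exists_radius {A : Type*} [Finite A] [TopologicalSpace A] [DiscreteTopology A]
    {X : Set (ℤ → A)} (hXc : IsClosed X) {e : (ℤ → A) → (ℤ → A)}
    (hcont : ContinuousOn e X) :
    ∃ r : ℕ, ∀ x ∈ X, ∀ y ∈ X, (∀ j : ℤ, |j| ≤ (r : ℤ) → x j = y j) → e x 0 = e y 0 := by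
  have hφ : ContinuousOn (fun x => e x 0) X := (continuous_apply (0 : ℤ)).comp_continuousOn hcont
  set s : Set ((ℤ → A) × (ℤ → A)) :=
    (X ×ˢ X) ∩ (fun p : (ℤ → A) × (ℤ → A) => (e p.1 0, e p.2 0)) ⁻¹' {q : A × A | q.1 ≠ q.2}
    with hs
  have hXX : IsClosed (X ×ˢ X) := hXc.prod hXc
  have hψ : ContinuousOn (fun p : (ℤ → A) × (ℤ → A) => (e p.1 0, e p.2 0)) (X ×ˢ X) := by
    refine ContinuousOn.prodMk ?_ ?_
    · exact hφ.comp continuousOn_fst fun p hp => hp.1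
    · exact hφ.comp continuousOn_snd fun p hp => hp.2
  have hscl : IsClosed s := hψ.preimage_isClosed_of_isClosed hXX (isClosed_discrete _)
  have hscomp : IsCompact s := hscl.isCompact
  set Z : ℕ → Set ((ℤ → A) × (ℤ → A)) :=
    fun r => {p | ∀ j : ℤ, |j| ≤ (r : ℤ) → p.1 j = p.2 j} with hZ
  have hZcl : ∀ r, IsClosed (Z r) := by
    intro r
    have : Z r = ⋂ (j : ℤ), ⋂ (_ : |j| ≤ (r : ℤ)), {p : (ℤ → A) × (ℤ → A) | p.1 j = p.2 j} := by
      ext p; simp [hZ, Set.mem_iInter]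
    rw [this]
    exact isClosed_iInter fun j => isClosed_iInter fun _ =>
      isClosed_eq ((continuous_apply j).comp continuous_fst)
        ((continuous_apply j).comp continuous_snd)
  have hempty : s ∩ ⋂ r, Z r = ∅ := by
    rw [Set.eq_empty_iff_forall_notMem]
    rintro p ⟨⟨-, hne⟩, hz⟩
    rw [Set.mem_iInter] at hz
    have : p.1 = p.2 := by
      funext j
      exact hz j.natAbs j (le_of_eq (Int.abs_eq_natAbs j))
    exact hne (by simp only [Set.mem_preimage, Set.mem_setOf_eq]; rw [this])
  have hdir : Directed (· ⊇ ·) Z := by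
    intro r₁ r₂
    refine ⟨max r₁ r₂, ?_, ?_⟩
    · intro p hp j hj
      exact hp j (hj.trans (by exact_mod_cast le_max_left r₁ r₂))
    · intro p hp j hj
      exact hp j (hj.trans (by exact_mod_cast le_max_right r₁ r₂))
  obtain ⟨r, hr⟩ := hscomp.elim_directed_family_closed Z hZcl hempty hdir
  refine ⟨r, fun x hx y hy hag => ?_⟩
  by_contra hne
  have : (x, y) ∈ s ∩ Z r := ⟨⟨⟨hx, hy⟩, hne⟩, hag⟩
  rw [hr] at this
  exact this

lemma finite_len {A : Type*} [Finite A] (n : ℕ) : {w : List A | w.length = n}.Finite := by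
  refine (Set.finite_range (fun g : Fin n → A => List.ofFn g)).subset ?_
  intro w hw
  have hw' : w.length = n := hw
  subst hw'
  exact ⟨w.get, List.ofFn_get w⟩

/-- If `X` is an SFT and `f : X → X` is a cellular automaton that is von
Neumann regular in `End(X)`, then the image `f(X)` is an SFT. -/
theorem stmt7 {A : Type*} [Finite A] [TopologicalSpace A] [DiscreteTopology A]
    (X : Set (ℤ → A)) (hX : IsSubshift X) (hXsft : IsSFT X)
    (f : (ℤ → A) → (ℤ → A)) (hf : IsCAOn X f)
    (hreg : IsRegularCAOn X f) :
    IsSFT (f '' X) := by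
  classical
  obtain ⟨h, hCA, hfh, -⟩ := hreg
  obtain ⟨hmaps, hcont, hcomm⟩ := hf
  obtain ⟨hmapsh, hconth, hcommh⟩ := hCA
  set e : (ℤ → A) → (ℤ → A) := fun x => f (h x) with he
  have emaps : Set.MapsTo e X X := fun x hx => hmaps (hmapsh hx)
  have econt : ContinuousOn e X := hcont.comp hconth hmapsh
  have ecomm : ∀ x ∈ X, e (shiftMap x) = shiftMap (e x) := by
    intro x hx
    simp only [he]
    rw [hcommh x hx, hcomm _ (hmapsh hx)]
  have himg : f '' X = {x | x ∈ X ∧ e x = x} := by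
    ext x; constructor
    · rintro ⟨y, hy, rfl⟩
      exact ⟨hmaps hy, hfh y hy⟩
    · rintro ⟨hx, hex⟩
      exact ⟨h x, hmapsh hx, hex⟩
  obtain ⟨r, hr⟩ := exists_radius hX.1 econt
  obtain ⟨F₀, hF₀fin, hXeq⟩ := hXsft
  set F₁ : Set (List A) := {w | w.length = 2*r+1 ∧ ∃ z ∈ X,
      (∀ k : Fin w.length, z (-(r:ℤ) + k) = w.get k) ∧ e z 0 ≠ z 0} with hF₁
  have hF₁fin : F₁.Finite := (finite_len (2*r+1)).subset fun w hw => hw.1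
  refine ⟨F₀ ∪ F₁, hF₀fin.union hF₁fin, ?_⟩
  ext x
  simp only [Set.mem_setOf_eq, Set.mem_union]
  constructor
  · intro hx
    rw [himg] at hx
    obtain ⟨hxX, hex⟩ := hx
    intro w hw
    rcases hw with hw | hw
    · have hxX' := hxX
      rw [hXeq] at hxX'
      exact hxX' w hw
    · rintro ⟨i, hocc⟩
      obtain ⟨hwlen, z, hzX, hzw, hze⟩ := hw
      set y := shiftZ (i + r) x with hy
      have hyX : y ∈ X := shiftZ_mem hX _ hxX
      have hag : ∀ j : ℤ, |j| ≤ (r:ℤ) → y j = z j := by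
        intro j hj
        obtain ⟨hj1, hj2⟩ := abs_le.mp hj
        have hklt : (j + r).toNat < w.length := by rw [hwlen]; omega
        have h1 := hocc ⟨(j+r).toNat, hklt⟩
        have h2 := hzw ⟨(j+r).toNat, hklt⟩
        have hyj : y j = w.get ⟨(j+r).toNat, hklt⟩ := by
          rw [← h1]
          show x (j + (i + r)) = x (i + ((j+r).toNat : ℤ))
          congr 1
          omega
        have hzj : z j = w.get ⟨(j+r).toNat, hklt⟩ := by
          rw [← h2]
          show z j = z (-(r:ℤ) + ((j+r).toNat : ℤ))
          congr 1
          omega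
        rw [hyj, hzj]
      have heq : e y 0 = e z 0 := hr y hyX z hzX hag
      have hey : e y = shiftZ (i + r) (e x) := shiftZ_comm hX emaps ecomm _ hxX
      have heyx : e y 0 = x (i + r) := by
        rw [hey]
        show (e x) (0 + (i + r)) = x (i + r)
        rw [hex]
        norm_num
      have hy0 : y 0 = x (i + r) := by
        show x (0 + (i + r)) = x (i + r)
        norm_num
      apply hze
      calc e z 0 = e y 0 := heq.symm
        _ = x (i + r) := heyx
        _ = y 0 := hy0.symm
        _ = z 0 := hag 0 (by simp)
  · intro hx
    have hxX : x ∈ X := by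
      rw [hXeq]
      intro w hw
      exact hx w (Or.inl hw)
    rw [himg]
    refine ⟨hxX, ?_⟩
    funext i0
    set y := shiftZ i0 x with hy
    have hyX : y ∈ X := shiftZ_mem hX _ hxX
    obtain ⟨w, hwlen, hget⟩ : ∃ w : List A, w.length = 2*r+1 ∧
        ∀ k : Fin w.length, w.get k = y (-(r:ℤ) + (k.val : ℤ)) :=
      ⟨List.ofFn (fun k : Fin (2*r+1) => y (-(r:ℤ) + (k:ℤ))), List.length_ofFn,
        fun k => by rw [List.get_ofFn]; rfl⟩
    have hocc : occursIn w x := by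
      refine ⟨i0 - r, fun k => ?_⟩
      rw [hget k]
      show x (i0 - r + k) = x (-(r:ℤ) + k + i0)
      congr 1
      omega
    have hnot : w ∉ F₁ := fun hmem => hx w (Or.inr hmem) hocc
    have hey0 : e y 0 = y 0 := by
      by_contra hne
      exact hnot ⟨hwlen, y, hyX, fun k => (hget k).symm, hne⟩
    have hey : e y = shiftZ i0 (e x) := shiftZ_comm hX emaps ecomm _ hxX
    have h1 : e x i0 = e y 0 := by
      rw [hey]
      show e x i0 = e x (0 + i0)
      norm_num
    have h2 : y 0 = x i0 := by
      show x (0 + i0) = x i0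
      norm_num
    rw [h1, hey0, h2]
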